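/- arXiv:1801.04095 — 4 statements merged into one kernel-verified Lean document; each statement's English description precedes it below -/
import Mathlib

section
/- Let C_1,…,C_k be a partition of [1:p] making the groups A_j := X_{C_j} mutually independent, and let Y = ∑_{w⊆[1:k]} g_w(A_w) be the Hoeffding decomposition of Y. Then for every u ⊆ [1:p], Var(E(Y|X_u)) = ∑_{w⊆[1:k]} Var(E(g_w(A_w)|X_{u∩C_w})), i.e. V_u = ∑_{w⊆[1:k]} V_{u∩C_w}^{g,w}. (Proposition 1) -/
open MeasureTheory ProbabilityTheory

section Aux

lemma aux_variance_congr {Ω : Type*} {m0 : MeasurableSpace Ω} {μ : Measure Ω}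
    {f g : Ω → ℝ} (h : f =ᵐ[μ] g) :
    variance f μ = variance g μ := by
  unfold ProbabilityTheory.variance ProbabilityTheory.evariance
  rw [integral_congr_ae h]
  congr 1
  refine lintegral_congr_ae ?_
  filter_upwards [h] with ω hω
  rw [hω]

lemma aux_integrable_mul {Ω : Type*} {m0 : MeasurableSpace Ω} {μ : Measure Ω}
    {f g : Ω → ℝ} (hf : MemLp f 2 μ) (hg : MemLp g 2 μ) :
    Integrable (fun ω => f ω * g ω) μ := by
  have h1 := (hf.add hg).integrable_sq
  have h2 := hf.integrable_sq
  have h3 := hg.integrable_sq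
  have heq : (fun ω => f ω * g ω)
      = fun ω => (((f + g) ω) ^ 2 - f ω ^ 2 - g ω ^ 2) / 2 := by
    funext ω; simp only [Pi.add_apply]; ring
  rw [heq]
  exact ((h1.sub h2).sub h3).div_const 2

lemma aux_memLp_condexp {Ω : Type*} {m : MeasurableSpace Ω} {m0 : MeasurableSpace Ω}
    {μ : Measure Ω} [IsProbabilityMeasure μ] (hm : m ≤ m0)
    {f : Ω → ℝ} (hf : MemLp f 2 μ) : MemLp (μ[f|m]) 2 μ := by
  have hface : (↑(condExpL2 ℝ ℝ hm (hf.toLp f)) : Ω → ℝ) =ᵐ[μ] μ[f|m] := by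
    refine ae_eq_condExp_of_forall_setIntegral_eq hm (hf.integrable one_le_two)
      (fun s _ hμs => integrableOn_condExpL2_of_measure_ne_top hm hμs.ne _)
      (fun s hs hμs => ?_) (aestronglyMeasurable_condExpL2 hm _)
    rw [integral_condExpL2_eq hm (hf.toLp f) hs hμs.ne]
    refine setIntegral_congr_ae (hm s hs) ?_
    filter_upwards [hf.coeFn_toLp] with ω hω _ using hω
  exact (Lp.memLp _).ae_eq hface

/-- Product formula for set integrals over intersections of independent sets. -/
lemma aux_setIntegral_inter {Ω : Type*} {m' m₂ : MeasurableSpace Ω}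
    {m0 : MeasurableSpace Ω} {μ : Measure Ω} [IsProbabilityMeasure μ]
    (hm' : m' ≤ m0) (h2 : m₂ ≤ m0) (hind : Indep m' m₂ μ)
    (h : Ω → ℝ) (hh : StronglyMeasurable[m'] h) {t₁ t₂ : Set Ω}
    (ht₁ : MeasurableSet[m'] t₁) (ht₂ : MeasurableSet[m₂] t₂) :
    ∫ x in t₁ ∩ t₂, h x ∂μ = (∫ x in t₁, h x ∂μ) * (μ t₂).toReal := by
  have hht : StronglyMeasurable[m'] (t₁.indicator h) := hh.indicator ht₁
  have h2t : StronglyMeasurable[m₂] (t₂.indicator (fun _ => (1 : ℝ))) :=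
    stronglyMeasurable_const.indicator ht₂
  have hindf : IndepFun (t₁.indicator h) (t₂.indicator (fun _ => (1 : ℝ))) μ := by
    rw [IndepFun_iff_Indep]
    exact indep_of_indep_of_le_right
      (indep_of_indep_of_le_left hind (measurable_iff_comap_le.mp hht.measurable))
      (measurable_iff_comap_le.mp h2t.measurable)
  have heq : ∀ x, (t₁ ∩ t₂).indicator h x
      = (t₁.indicator h * t₂.indicator (fun _ => (1 : ℝ))) x := by
    intro x
    by_cases hx1 : x ∈ t₁ <;> by_cases hx2 : x ∈ t₂ <;>
      simp [Set.indicator, hx1, hx2, Set.mem_inter_iff]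
  calc ∫ x in t₁ ∩ t₂, h x ∂μ
      = ∫ x, (t₁ ∩ t₂).indicator h x ∂μ :=
        (integral_indicator ((hm' _ ht₁).inter (h2 _ ht₂))).symm
    _ = ∫ x, (t₁.indicator h * t₂.indicator (fun _ => (1 : ℝ))) x ∂μ :=
        integral_congr_ae (Filter.Eventually.of_forall heq)
    _ = (∫ x, t₁.indicator h x ∂μ) * ∫ x, t₂.indicator (fun _ => (1 : ℝ)) x ∂μ :=
        hindf.integral_mul_eq_mul_integral (hht.mono hm').aestronglyMeasurable
          (h2t.mono h2).aestronglyMeasurable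
    _ = (∫ x in t₁, h x ∂μ) * (μ t₂).toReal := by
        rw [integral_indicator (hm' _ ht₁), integral_indicator (h2 _ ht₂)]
        simp [measureReal_def]

/-- If `f` is `m₁`-strongly measurable, `m₃ ≤ m₁` and `m₂` is independent of `m₁`, then
conditioning on `m₃ ⊔ m₂` is the same as conditioning on `m₃`. -/
lemma aux_condexp_sup_indep {Ω : Type*} {m₁ m₂ m₃ : MeasurableSpace Ω}
    {m0 : MeasurableSpace Ω} {μ : Measure Ω} [IsProbabilityMeasure μ]
    (h1 : m₁ ≤ m0) (h2 : m₂ ≤ m0) (h3 : m₃ ≤ m₁)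
    (hindep : Indep m₁ m₂ μ) {f : Ω → ℝ} (hf : StronglyMeasurable[m₁] f)
    (hfint : Integrable f μ) : μ[f | m₃ ⊔ m₂] =ᵐ[μ] μ[f | m₃] := by
  have h3Ω : m₃ ≤ m0 := h3.trans h1
  have h32 : m₃ ⊔ m₂ ≤ m0 := sup_le h3Ω h2
  have hind3 : Indep m₃ m₂ μ := indep_of_indep_of_le_left hindep h3
  have hgint : Integrable (μ[f|m₃]) μ := integrable_condExp
  -- the generating π-system of `m₃ ⊔ m₂`
  set S : Set (Set Ω) :=
    {t | ∃ t₁ t₂, MeasurableSet[m₃] t₁ ∧ MeasurableSet[m₂] t₂ ∧ t = t₁ ∩ t₂} with hS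
  have hgen : (m₃ ⊔ m₂) = MeasurableSpace.generateFrom S := by
    apply le_antisymm
    · refine sup_le ?_ ?_
      · exact fun t ht => MeasurableSpace.measurableSet_generateFrom
          ⟨t, Set.univ, ht, MeasurableSet.univ, (Set.inter_univ t).symm⟩
      · exact fun t ht => MeasurableSpace.measurableSet_generateFrom
          ⟨Set.univ, t, MeasurableSet.univ, ht, (Set.univ_inter t).symm⟩
    · refine MeasurableSpace.generateFrom_le ?_
      rintro t ⟨t₁, t₂, ht₁, ht₂, rfl⟩
      exact ((le_sup_left : m₃ ≤ m₃ ⊔ m₂) _ ht₁).inter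
        ((le_sup_right : m₂ ≤ m₃ ⊔ m₂) _ ht₂)
  have hpi : IsPiSystem S := by
    rintro _ ⟨a, b, ha, hb, rfl⟩ _ ⟨a', b', ha', hb', rfl⟩ -
    exact ⟨a ∩ a', b ∩ b', ha.inter ha', hb.inter hb', Set.inter_inter_inter_comm a b a' b'⟩
  have hP : ∀ s : Set Ω, MeasurableSet[m₃ ⊔ m₂] s →
      ∫ x in s, (μ[f|m₃]) x ∂μ = ∫ x in s, f x ∂μ := by
    refine MeasurableSpace.induction_on_inter (m := m₃ ⊔ m₂)
      (C := fun s _ => ∫ x in s, (μ[f|m₃]) x ∂μ = ∫ x in s, f x ∂μ) hgen hpi ?_ ?_ ?_ ?_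
    · simp
    · rintro t ⟨t₁, t₂, ht₁, ht₂, rfl⟩
      rw [aux_setIntegral_inter h3Ω h2 hind3 _ stronglyMeasurable_condExp ht₁ ht₂,
        aux_setIntegral_inter h1 h2 hindep f hf (h3 _ ht₁) ht₂,
        setIntegral_condExp h3Ω hfint ht₁]
    · intro t htm ht
      have htm0 : MeasurableSet[m0] t := h32 _ htm
      have ha := integral_add_compl htm0 hgint
      have hb := integral_add_compl htm0 hfint
      have hc : ∫ x, (μ[f|m₃]) x ∂μ = ∫ x, f x ∂μ := integral_condExp h3Ω
      linarith
    · intro g hdisj hmeas hind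
      rw [integral_iUnion (fun i => h32 _ (hmeas i)) hdisj hgint.integrableOn,
        integral_iUnion (fun i => h32 _ (hmeas i)) hdisj hfint.integrableOn]
      exact tsum_congr hind
  exact (ae_eq_condExp_of_forall_setIntegral_eq h32 hfint
    (fun s _ _ => integrable_condExp.integrableOn)
    (fun s hs _ => hP s hs)
    (((stronglyMeasurable_condExp (m := m₃) (μ := μ) (f := f)).mono
      (le_sup_left : m₃ ≤ m₃ ⊔ m₂)).aestronglyMeasurable)).symm

end Aux

/-- Proposition 1: If the groups `A_j = X_{C_j}` are mutually independent
and `Y = ∑_{w⊆[1:k]} g_w(A_w)` is the Hoeffding decomposition of `Y`, then for every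
`u ⊆ [1:p]`, `Var(E(Y|X_u)) = ∑_{w⊆[1:k]} Var(E(g_w(A_w)|X_{u∩C_w}))`.
Here `g_w(A_w)` is encoded as a random variable `G w` that is strongly measurable with
respect to the σ-algebra generated by `X_{C_w}`, and the Hoeffding property is
`E(g_w(A_w)|A_z) = 0` a.s. whenever `w ⊄ z`. -/
theorem hoeffding_variance_decomposition
    {Ω : Type*} [MeasurableSpace Ω] (μ : Measure Ω) [IsProbabilityMeasure μ]
    {p k : ℕ} {E : Fin p → Type*} [∀ i, MeasurableSpace (E i)]
    (X : ∀ i, Ω → E i) (hX : ∀ i, Measurable (X i))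
    (C : Fin k → Finset (Fin p))
    (hpart : ∀ i : Fin p, ∃! j : Fin k, i ∈ C j)
    (hindep : iIndep
      (fun j : Fin k => ⨆ i ∈ C j, MeasurableSpace.comap (X i) inferInstance) μ)
    (Y : Ω → ℝ) (hY : MemLp Y 2 μ) (hVarY : variance Y μ ≠ 0)
    (G : Finset (Fin k) → Ω → ℝ)
    (hGmeas : ∀ w : Finset (Fin k),
      StronglyMeasurable[⨆ i ∈ w.biUnion C, MeasurableSpace.comap (X i) inferInstance]
        (G w))
    (hGL2 : ∀ w : Finset (Fin k), MemLp (G w) 2 μ)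
    (hsum : Y =ᵐ[μ] fun ω => ∑ w : Finset (Fin k), G w ω)
    (hzero : ∀ w z : Finset (Fin k), ¬ w ⊆ z →
      μ[G w | ⨆ i ∈ z.biUnion C, MeasurableSpace.comap (X i) inferInstance] =ᵐ[μ] 0)
    (u : Finset (Fin p)) :
    variance (μ[Y | ⨆ i ∈ u, MeasurableSpace.comap (X i) inferInstance]) μ
      = ∑ w : Finset (Fin k),
          variance
            (μ[G w | ⨆ i ∈ u ∩ w.biUnion C, MeasurableSpace.comap (X i) inferInstance])
            μ := by
  classical
  -- notation
  set F : Finset (Fin p) → MeasurableSpace Ω :=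
    fun s => ⨆ i ∈ s, MeasurableSpace.comap (X i) inferInstance with hF
  have hF_le : ∀ s, F s ≤ ‹MeasurableSpace Ω› := fun s =>
    iSup₂_le fun i _ => measurable_iff_comap_le.mp (hX i)
  have hF_mono : ∀ {s t : Finset (Fin p)}, s ⊆ t → F s ≤ F t := by
    intro s t hst
    exact iSup₂_le fun i hi =>
      le_iSup₂ (f := fun i (_ : i ∈ t) => MeasurableSpace.comap (X i) inferInstance) i (hst hi)
  have hF_union : ∀ s t : Finset (Fin p), F (s ∪ t) = F s ⊔ F t := by
    intro s t
    apply le_antisymm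
    · refine iSup₂_le fun i hi => ?_
      rcases Finset.mem_union.mp hi with h | h
      · exact le_sup_of_le_left
          (le_iSup₂ (f := fun i (_ : i ∈ s) => MeasurableSpace.comap (X i) inferInstance) i h)
      · exact le_sup_of_le_right
          (le_iSup₂ (f := fun i (_ : i ∈ t) => MeasurableSpace.comap (X i) inferInstance) i h)
    · exact sup_le (hF_mono Finset.subset_union_left) (hF_mono Finset.subset_union_right)
  -- the σ-algebra of a union of groups
  have h_biUnion : ∀ w : Finset (Fin k),
      F (w.biUnion C) = ⨆ j ∈ (w : Set (Fin k)), F (C j) := by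
    intro w
    apply le_antisymm
    · refine iSup₂_le fun i hi => ?_
      obtain ⟨j, hj, hij⟩ := Finset.mem_biUnion.mp hi
      calc MeasurableSpace.comap (X i) inferInstance ≤ F (C j) :=
            le_iSup₂ (f := fun i (_ : i ∈ C j) =>
              MeasurableSpace.comap (X i) inferInstance) i hij
        _ ≤ ⨆ j ∈ (w : Set (Fin k)), F (C j) :=
            le_iSup₂ (f := fun j (_ : j ∈ (w : Set (Fin k))) => F (C j)) j
              (Finset.mem_coe.mpr hj)
    · refine iSup₂_le fun j hj => ?_
      exact hF_mono (Finset.subset_biUnion_of_mem C (Finset.mem_coe.mp hj))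
  -- independence of a group σ-algebra from variables outside the group
  have hindep' : ∀ (w : Finset (Fin k)) (s : Finset (Fin p)),
      (∀ i ∈ s, ∀ j, i ∈ C j → j ∉ w) → Indep (F (w.biUnion C)) (F s) μ := by
    intro w s hs
    have h := indep_iSup_of_disjoint
      (m := fun j : Fin k => ⨆ i ∈ C j, MeasurableSpace.comap (X i) inferInstance)
      (fun j => hF_le (C j)) hindep
      (S := (w : Set (Fin k))) (T := ((w : Set (Fin k)))ᶜ) disjoint_compl_right
    refine indep_of_indep_of_le_right (indep_of_indep_of_le_left h ?_) ?_
    · exact (h_biUnion w).le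
    · refine iSup₂_le fun i hi => ?_
      obtain ⟨j, hj, -⟩ := hpart i
      have hjw : j ∉ w := hs i hi j hj
      calc MeasurableSpace.comap (X i) inferInstance ≤ F (C j) :=
            le_iSup₂ (f := fun i (_ : i ∈ C j) =>
              MeasurableSpace.comap (X i) inferInstance) i hj
        _ ≤ ⨆ j ∈ ((w : Set (Fin k)))ᶜ, F (C j) :=
            le_iSup₂ (f := fun j (_ : j ∈ ((w : Set (Fin k)))ᶜ) => F (C j)) j
              (by simpa using hjw)
  have hG_int : ∀ w, Integrable (G w) μ := fun w => (hGL2 w).integrable one_le_two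
  -- the key conditional-expectation reduction
  have L1 : ∀ (w : Finset (Fin k)) (s : Finset (Fin p)),
      μ[G w | F s] =ᵐ[μ] μ[G w | F (s ∩ w.biUnion C)] := by
    intro w s
    have hsq : s = (s ∩ w.biUnion C) ∪ (s \ w.biUnion C) := by
      ext i
      simp only [Finset.mem_union, Finset.mem_inter, Finset.mem_sdiff]
      tauto
    have hsplit : F s = F (s ∩ w.biUnion C) ⊔ F (s \ w.biUnion C) := by
      conv_lhs => rw [hsq]
      exact hF_union _ _
    rw [hsplit]
    refine aux_condexp_sup_indep (hF_le (w.biUnion C)) (hF_le _)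
      (hF_mono Finset.inter_subset_right) ?_ (hGmeas w) (hG_int w)
    refine hindep' w _ fun i hi j hij hjw => ?_
    exact (Finset.mem_sdiff.mp hi).2 (Finset.mem_biUnion.mpr ⟨j, hjw, hij⟩)
  -- the conditional expectations appearing on the right-hand side
  set M : Finset (Fin k) → Ω → ℝ := fun w => μ[G w | F (u ∩ w.biUnion C)] with hM
  have hM_L2 : ∀ w, MemLp (M w) 2 μ := fun w => aux_memLp_condexp (hF_le _) (hGL2 w)
  have hM_int : ∀ w, Integrable (M w) μ := fun w => integrable_condExp
  -- step A : the conditional expectation of Y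
  have hYcond : μ[Y | F u] =ᵐ[μ] fun ω => ∑ w : Finset (Fin k), M w ω := by
    have h1 : (fun ω => ∑ w : Finset (Fin k), G w ω) = ∑ w : Finset (Fin k), G w := by
      funext ω; simp
    have h2 : μ[Y | F u] =ᵐ[μ] μ[∑ w : Finset (Fin k), G w | F u] :=
      condExp_congr_ae (by rw [← h1]; exact hsum)
    have h3 : μ[∑ w : Finset (Fin k), G w | F u]
        =ᵐ[μ] ∑ w : Finset (Fin k), μ[G w | F u] :=
      condExp_finsetSum (fun w _ => hG_int w) (F u)
    refine (h2.trans h3).trans ?_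
    have h4 : ∀ᵐ ω ∂μ, ∀ w : Finset (Fin k), (μ[G w | F u]) ω = M w ω :=
      ae_all_iff.mpr fun w => L1 w u
    filter_upwards [h4] with ω hω
    simp only [Finset.sum_apply]
    exact Finset.sum_congr rfl fun w _ => hω w
  -- zero mean of nonempty components
  have hmean : ∀ w : Finset (Fin k), w ≠ ∅ → ∫ ω, M w ω ∂μ = 0 := by
    intro w hw
    have hz := hzero w ∅ (by simpa [Finset.subset_empty] using hw)
    have hGmean : ∫ ω, G w ω ∂μ = 0 := by
      have h0 : ∫ ω, (μ[G w | F ((∅ : Finset (Fin k)).biUnion C)]) ω ∂μ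
          = ∫ ω, G w ω ∂μ := integral_condExp (hF_le _)
      rw [← h0, integral_congr_ae hz]
      simp
    show ∫ ω, (μ[G w | F (u ∩ w.biUnion C)]) ω ∂μ = 0
    rw [integral_condExp (hF_le _), hGmean]
  -- orthogonality
  have hkey : ∀ w w' : Finset (Fin k), ¬ w ⊆ w' →
      ∫ ω, M w ω * M w' ω ∂μ = 0 := by
    intro w w' hww'
    -- rewrite M w as a conditional expectation with respect to the larger σ-algebra
    have h1 : μ[G w | F (u ∩ (w ∪ w').biUnion C)] =ᵐ[μ] M w := by
      have hL := L1 w (u ∩ (w ∪ w').biUnion C)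
      have heq : (u ∩ (w ∪ w').biUnion C) ∩ w.biUnion C = u ∩ w.biUnion C := by
        rw [Finset.inter_assoc]
        congr 1
        refine Finset.inter_eq_right.mpr ?_
        exact Finset.biUnion_subset_biUnion_of_subset_left C Finset.subset_union_left
      rw [heq] at hL
      exact hL
    have h2 : StronglyMeasurable[F (u ∩ (w ∪ w').biUnion C)] (M w') := by
      refine stronglyMeasurable_condExp.mono (hF_mono ?_)
      exact Finset.inter_subset_inter (le_refl u)
        (Finset.biUnion_subset_biUnion_of_subset_left C Finset.subset_union_right)
    have hint1 : Integrable (M w' * G w) μ := by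
      have := aux_integrable_mul (hM_L2 w') (hGL2 w)
      simpa [Pi.mul_def] using this
    have e1 : ∫ ω, M w ω * M w' ω ∂μ
        = ∫ ω, M w' ω * (μ[G w | F (u ∩ (w ∪ w').biUnion C)]) ω ∂μ := by
      refine integral_congr_ae ?_
      filter_upwards [h1] with ω hω
      rw [hω, mul_comm]
    have e2 : μ[M w' * G w | F (u ∩ (w ∪ w').biUnion C)]
        =ᵐ[μ] M w' * μ[G w | F (u ∩ (w ∪ w').biUnion C)] :=
      condExp_mul_of_stronglyMeasurable_left h2 hint1 (hG_int w)
    have e3 : ∫ ω, M w' ω * (μ[G w | F (u ∩ (w ∪ w').biUnion C)]) ω ∂μ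
        = ∫ ω, (M w' * G w) ω ∂μ := by
      have h4 : ∫ ω, (μ[M w' * G w | F (u ∩ (w ∪ w').biUnion C)]) ω ∂μ
          = ∫ ω, (M w' * G w) ω ∂μ := integral_condExp (hF_le _)
      calc ∫ ω, M w' ω * (μ[G w | F (u ∩ (w ∪ w').biUnion C)]) ω ∂μ
          = ∫ ω, (M w' * μ[G w | F (u ∩ (w ∪ w').biUnion C)]) ω ∂μ := rfl
        _ = ∫ ω, (μ[M w' * G w | F (u ∩ (w ∪ w').biUnion C)]) ω ∂μ :=
            (integral_congr_ae e2).symm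
        _ = ∫ ω, (M w' * G w) ω ∂μ := h4
    -- now condition on the σ-algebra of the group w'
    have h5 : StronglyMeasurable[F (w'.biUnion C)] (M w') :=
      stronglyMeasurable_condExp.mono (hF_mono Finset.inter_subset_right)
    have e4 : μ[M w' * G w | F (w'.biUnion C)]
        =ᵐ[μ] M w' * μ[G w | F (w'.biUnion C)] :=
      condExp_mul_of_stronglyMeasurable_left h5 hint1 (hG_int w)
    have e5 : ∫ ω, (M w' * G w) ω ∂μ = 0 := by
      have h6 : ∫ ω, (μ[M w' * G w | F (w'.biUnion C)]) ω ∂μ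
          = ∫ ω, (M w' * G w) ω ∂μ := integral_condExp (hF_le _)
      have h7 : ∫ ω, (μ[M w' * G w | F (w'.biUnion C)]) ω ∂μ = 0 := by
        have hz := hzero w w' hww'
        have : μ[M w' * G w | F (w'.biUnion C)] =ᵐ[μ] fun _ => (0 : ℝ) := by
          refine e4.trans ?_
          filter_upwards [hz] with ω hω
          simp only [Pi.mul_apply, show (μ[G w | F (w'.biUnion C)]) ω = 0 from hω, mul_zero]
        rw [integral_congr_ae this]
        simp
      exact h6.symm.trans h7
    rw [e1, e3, e5]
  -- uncorrelatedness of distinct components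
  have hoff : ∀ w w' : Finset (Fin k), w ≠ w' →
      ∫ ω, M w ω * M w' ω ∂μ = (∫ ω, M w ω ∂μ) * (∫ ω, M w' ω ∂μ) := by
    intro w w' hne
    by_cases h : w ⊆ w'
    · have h' : ¬ w' ⊆ w := fun h2 => hne (Finset.Subset.antisymm h h2)
      have hmw' : ∫ ω, M w' ω ∂μ = 0 := hmean w' (by
        rintro rfl; exact h' (Finset.empty_subset w))
      have hcomm : ∫ ω, M w ω * M w' ω ∂μ = ∫ ω, M w' ω * M w ω ∂μ := by
        refine integral_congr_ae (Filter.Eventually.of_forall fun ω => ?_)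
        ring_nf
      rw [hcomm, hkey w' w h', hmw', mul_zero]
    · have hmw : ∫ ω, M w ω ∂μ = 0 := hmean w (by
        rintro rfl; exact h (Finset.empty_subset w'))
      rw [hkey w w' h, hmw, zero_mul]
  -- put everything together
  have hsum_L2 : MemLp (fun ω => ∑ w : Finset (Fin k), M w ω) 2 μ :=
    memLp_finsetSum Finset.univ fun w _ => hM_L2 w
  have hprod_int : ∀ w w' : Finset (Fin k),
      Integrable (fun ω => M w ω * M w' ω) μ := fun w w' =>
    aux_integrable_mul (hM_L2 w) (hM_L2 w')
  have hVsum : variance (fun ω => ∑ w : Finset (Fin k), M w ω) μ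
      = ∑ w : Finset (Fin k), variance (M w) μ := by
    have hsq : ∫ ω, (∑ w : Finset (Fin k), M w ω) ^ 2 ∂μ
        = ∑ w : Finset (Fin k), ∑ w' : Finset (Fin k), ∫ ω, M w ω * M w' ω ∂μ := by
      have hpt : ∀ ω, (∑ w : Finset (Fin k), M w ω) ^ 2
          = ∑ w : Finset (Fin k), ∑ w' : Finset (Fin k), M w ω * M w' ω := by
        intro ω
        rw [sq, Finset.sum_mul_sum]
      rw [integral_congr_ae (Filter.Eventually.of_forall hpt)]
      rw [integral_finset_sum _ fun w _ =>
        integrable_finset_sum _ fun w' _ => hprod_int w w']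
      exact Finset.sum_congr rfl fun w _ =>
        integral_finset_sum _ fun w' _ => hprod_int w w'
    have hmeansum : ∫ ω, (∑ w : Finset (Fin k), M w ω) ∂μ
        = ∑ w : Finset (Fin k), ∫ ω, M w ω ∂μ :=
      integral_finset_sum _ fun w _ => hM_int w
    have hmean2 : (∫ ω, (∑ w : Finset (Fin k), M w ω) ∂μ) ^ 2
        = ∑ w : Finset (Fin k), ∑ w' : Finset (Fin k),
            (∫ ω, M w ω ∂μ) * (∫ ω, M w' ω ∂μ) := by
      rw [hmeansum, sq, Finset.sum_mul_sum]
    calc variance (fun ω => ∑ w : Finset (Fin k), M w ω) μ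
        = (∫ ω, (∑ w : Finset (Fin k), M w ω) ^ 2 ∂μ)
            - (∫ ω, (∑ w : Finset (Fin k), M w ω) ∂μ) ^ 2 := variance_eq_sub hsum_L2
      _ = ∑ w : Finset (Fin k), ∑ w' : Finset (Fin k),
            ((∫ ω, M w ω * M w' ω ∂μ) - (∫ ω, M w ω ∂μ) * (∫ ω, M w' ω ∂μ)) := by
          rw [hsq, hmean2, ← Finset.sum_sub_distrib]
          exact Finset.sum_congr rfl fun w _ => (Finset.sum_sub_distrib _ _).symm
      _ = ∑ w : Finset (Fin k), variance (M w) μ := by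
          refine Finset.sum_congr rfl fun w _ => ?_
          rw [Finset.sum_eq_single w]
          · have hvw : variance (M w) μ
                = (∫ ω, (M w ω) ^ 2 ∂μ) - (∫ ω, M w ω ∂μ) ^ 2 := variance_eq_sub (hM_L2 w)
            have hsqw : ∫ ω, M w ω * M w ω ∂μ = ∫ ω, (M w ω) ^ 2 ∂μ := by
              refine integral_congr_ae (Filter.Eventually.of_forall fun ω => ?_)
              ring
            rw [hsqw, ← sq, hvw]
          · intro w' _ hw'
            rw [hoff w w' fun hcon => hw' hcon.symm]
            ring
          · intro hcon; exact absurd (Finset.mem_univ w) hcon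
  calc variance (μ[Y | F u]) μ
      = variance (fun ω => ∑ w : Finset (Fin k), M w ω) μ := aux_variance_congr hYcond
    _ = ∑ w : Finset (Fin k), variance (M w) μ := hVsum
end

section
/- Suppose the model is block-additive: Y = ∑_{j=1}^k g_j(A_j), where the groups A_j = X_{C_j} are mutually independent and each g_j(A_j) is square-integrable. Then for every u ⊆ [1:p] such that u ⊄ C_j for every j ∈ [1:k], the Sobol index of Y vanishes: S_u = (1/Var(Y)) ∑_{v⊆u} (−1)^{|u|−|v|} Var(E(Y|X_v)) = 0. (Corollary 1) -/
open MeasureTheory ProbabilityTheory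

section Aux

variable {Ω : Type*} {m0 : MeasurableSpace Ω} {μ : Measure Ω} [IsProbabilityMeasure μ]

lemma my_variance_congr {f g : Ω → ℝ} (h : f =ᵐ[μ] g) : variance f μ = variance g μ := by
  have hint : μ[f] = μ[g] := integral_congr_ae h
  rw [ProbabilityTheory.variance, ProbabilityTheory.variance,
    ProbabilityTheory.evariance, ProbabilityTheory.evariance, hint]
  congr 1
  refine lintegral_congr_ae (h.mono fun ω hω => by dsimp only; rw [hω])

lemma my_memℒp_two_condexp {m : MeasurableSpace Ω} (hm : m ≤ m0) {f : Ω → ℝ}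
    (hf : MemLp f 2 μ) : MemLp (μ[f|m]) 2 μ := by
  have hae : (condExpL2 ℝ ℝ hm (hf.toLp f) : Ω → ℝ) =ᵐ[μ] μ[f|m] := by
    refine ae_eq_condExp_of_forall_setIntegral_eq hm (hf.integrable one_le_two) ?_ ?_ ?_
    · intro s hs hμs
      exact integrableOn_condExpL2_of_measure_ne_top hm hμs.ne _
    · intro s hs hμs
      rw [integral_condExpL2_eq hm (hf.toLp f) hs hμs.ne]
      exact integral_congr_ae (ae_restrict_of_ae hf.coeFn_toLp)
    · exact aestronglyMeasurable_condExpL2 hm _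
  exact (Lp.memLp _).ae_eq hae

end Aux

section Key

lemma my_condexp_sup_indep {Ω : Type*} {m₁ m₂ mf : MeasurableSpace Ω} [m0 : MeasurableSpace Ω]
    {μ : Measure Ω} [IsProbabilityMeasure μ] (hf_le : mf ≤ m0) (h₂ : m₂ ≤ m0)
    (h₁f : m₁ ≤ mf) {f : Ω → ℝ} (hfm : StronglyMeasurable[mf] f) (hfi : Integrable f μ)
    (hindep : Indep mf m₂ μ) : μ[f | m₁ ⊔ m₂] =ᵐ[μ] μ[f | m₁] := by
  have h₁ : m₁ ≤ m0 := h₁f.trans hf_le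
  have hm : m₁ ⊔ m₂ ≤ m0 := sup_le h₁ h₂
  -- key integral computation
  have key : ∀ (h : Ω → ℝ), Integrable h μ → StronglyMeasurable[mf] h →
      ∀ s₁ s₂ : Set Ω, MeasurableSet[m₁] s₁ → MeasurableSet[m₂] s₂ →
      ∫ x in s₁ ∩ s₂, h x ∂μ = (μ s₂).toReal * ∫ x in s₁, h x ∂μ := by
    intro h hint hsm s₁ s₂ hs₁ hs₂
    have hs₁0 : MeasurableSet[m0] s₁ := h₁ s₁ hs₁
    have hs₂0 : MeasurableSet[m0] s₂ := h₂ s₂ hs₂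
    have h₁sm : StronglyMeasurable[mf] (s₁.indicator h) := hsm.indicator (h₁f s₁ hs₁)
    have h₁int : Integrable (s₁.indicator h) μ := hint.indicator hs₁0
    have hce : μ[s₁.indicator h | m₂] =ᵐ[μ] fun _ => μ[s₁.indicator h] :=
      condExp_indep_eq hf_le h₂ h₁sm hindep
    calc ∫ x in s₁ ∩ s₂, h x ∂μ = ∫ x in s₂, s₁.indicator h x ∂μ := by
          rw [setIntegral_indicator (μ := μ) hs₁0, Set.inter_comm]
      _ = ∫ x in s₂, (μ[s₁.indicator h | m₂]) x ∂μ := (setIntegral_condExp h₂ h₁int hs₂).symm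
      _ = ∫ _ in s₂, μ[s₁.indicator h] ∂μ := integral_congr_ae (ae_restrict_of_ae hce)
      _ = (μ s₂).toReal * μ[s₁.indicator h] := by rw [setIntegral_const (μ := μ)]; simp [smul_eq_mul, Measure.real]
      _ = (μ s₂).toReal * ∫ x in s₁, h x ∂μ := by rw [integral_indicator (μ := μ) hs₁0]
  -- the π-system generating m₁ ⊔ m₂
  set S : Set (Set Ω) :=
    {s | ∃ s₁ s₂ : Set Ω, MeasurableSet[m₁] s₁ ∧ MeasurableSet[m₂] s₂ ∧ s = s₁ ∩ s₂} with hS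
  have h_eq : m₁ ⊔ m₂ = MeasurableSpace.generateFrom S := by
    refine le_antisymm (sup_le ?_ ?_) (MeasurableSpace.generateFrom_le ?_)
    · intro t ht
      exact MeasurableSpace.measurableSet_generateFrom
        ⟨t, Set.univ, ht, MeasurableSet.univ, (Set.inter_univ t).symm⟩
    · intro t ht
      exact MeasurableSpace.measurableSet_generateFrom
        ⟨Set.univ, t, MeasurableSet.univ, ht, (Set.univ_inter t).symm⟩
    · rintro t ⟨s₁, s₂, h1, h2, rfl⟩
      exact ((le_sup_left : m₁ ≤ m₁ ⊔ m₂) s₁ h1).inter ((le_sup_right : m₂ ≤ m₁ ⊔ m₂) s₂ h2)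
  have h_pi : IsPiSystem S := by
    rintro a ⟨a1, a2, ha1, ha2, rfl⟩ b ⟨b1, b2, hb1, hb2, rfl⟩ -
    exact ⟨a1 ∩ b1, a2 ∩ b2, ha1.inter hb1, ha2.inter hb2, by
      rw [Set.inter_inter_inter_comm]⟩
  have heq : ∀ s : Set Ω, MeasurableSet[m₁ ⊔ m₂] s → μ s < ⊤ →
      ∫ x in s, (μ[f|m₁]) x ∂μ = ∫ x in s, f x ∂μ := by
    intro s hs _
    refine MeasurableSpace.induction_on_inter (m := m₁ ⊔ m₂)
      (C := fun s _ => ∫ x in s, (μ[f|m₁]) x ∂μ = ∫ x in s, f x ∂μ) h_eq h_pi ?_ ?_ ?_ ?_ s hs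
    · simp
    · rintro t ⟨s₁, s₂, hs₁, hs₂, rfl⟩
      rw [key (μ[f|m₁]) integrable_condExp (stronglyMeasurable_condExp.mono h₁f) s₁ s₂ hs₁ hs₂,
        key f hfi hfm s₁ s₂ hs₁ hs₂, setIntegral_condExp h₁ hfi hs₁]
    · intro t htm ht
      have htm0 : MeasurableSet[m0] t := hm t htm
      have e1 : ∫ x in t, (μ[f|m₁]) x ∂μ + ∫ x in tᶜ, (μ[f|m₁]) x ∂μ = ∫ x, (μ[f|m₁]) x ∂μ :=
        integral_add_compl htm0 integrable_condExp
      have e2 : ∫ x in t, f x ∂μ + ∫ x in tᶜ, f x ∂μ = ∫ x, f x ∂μ :=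
        integral_add_compl htm0 hfi
      have e3 : ∫ x, (μ[f|m₁]) x ∂μ = ∫ x, f x ∂μ := integral_condExp h₁
      linarith
    · intro g hdisj hgm hg
      have hgm0 : ∀ i, MeasurableSet[m0] (g i) := fun i => hm _ (hgm i)
      rw [integral_iUnion hgm0 hdisj integrable_condExp.integrableOn,
        integral_iUnion hgm0 hdisj hfi.integrableOn]
      exact tsum_congr hg
  exact (ae_eq_condExp_of_forall_setIntegral_eq hm hfi
    (fun s _ _ => integrable_condExp.integrableOn) heq
    ((stronglyMeasurable_condExp.mono (le_sup_left : m₁ ≤ m₁ ⊔ m₂)).aestronglyMeasurable)).symm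

end Key

lemma my_alt_sum_zero {α : Type*} [DecidableEq α] (u : Finset α) (w : Finset α → ℝ) (i₀ : α)
    (hi₀ : i₀ ∈ u) (hw : ∀ v, w (insert i₀ v) = w v) :
    ∑ v ∈ u.powerset, (-1 : ℝ) ^ (u.card - v.card) * w v = 0 := by
  rw [← Finset.insert_erase hi₀, Finset.sum_powerset_insert (Finset.notMem_erase _ _),
    ← Finset.sum_add_distrib]
  refine Finset.sum_eq_zero fun t ht => ?_
  have htu : t ⊆ u.erase i₀ := Finset.mem_powerset.mp ht
  have hti : i₀ ∉ t := fun h => Finset.notMem_erase i₀ u (htu h)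
  have hcards : t.card ≤ (u.erase i₀).card := Finset.card_le_card htu
  rw [hw t, Finset.card_insert_of_notMem hti,
    Finset.card_insert_of_notMem (Finset.notMem_erase _ _)]
  have h1 : (u.erase i₀).card + 1 - (t.card + 1) = (u.erase i₀).card - t.card := by omega
  have h2 : (u.erase i₀).card + 1 - t.card = ((u.erase i₀).card - t.card) + 1 := by omega
  rw [h1, h2, pow_succ]
  ring

lemma my_variance_decomp {Ω : Type*} [m0 : MeasurableSpace Ω]
    {μ : Measure Ω} [IsProbabilityMeasure μ]
    {k : ℕ} {B : Fin k → MeasurableSpace Ω} (hB : ∀ j, B j ≤ m0) (hindep : iIndep B μ)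
    {G : Fin k → Ω → ℝ} (hGmeas : ∀ j, StronglyMeasurable[B j] (G j))
    (hGL2 : ∀ j, MemLp (G j) 2 μ)
    {Y : Ω → ℝ} (hsum : Y =ᵐ[μ] fun ω => ∑ j, G j ω)
    (n : Fin k → MeasurableSpace Ω) (hn : ∀ j, n j ≤ B j)
    (m₂ : Fin k → MeasurableSpace Ω)
    (hm₂ : ∀ j, m₂ j ≤ ⨆ j' ∈ ({j}ᶜ : Set (Fin k)), B j')
    (m : MeasurableSpace Ω) (hdecomp : ∀ j, m = n j ⊔ m₂ j) :
    variance (μ[Y | m]) μ = ∑ j, variance (μ[G j | n j]) μ := by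
  have hint : ∀ j, Integrable (G j) μ := fun j => (hGL2 j).integrable one_le_two
  have h1 : μ[Y|m] =ᵐ[μ] ∑ j, μ[G j|m] := by
    have e2 : (fun ω => ∑ j, G j ω) = ∑ j, G j := by
      funext ω; simp [Finset.sum_apply]
    have e1 : μ[Y|m] =ᵐ[μ] μ[fun ω => ∑ j, G j ω|m] := condExp_congr_ae hsum
    rw [e2] at e1
    exact e1.trans (condExp_finset_sum (fun j _ => hint j) m)
  have h2 : ∀ j, μ[G j|m] =ᵐ[μ] μ[G j| n j] := by
    intro j
    have hB2 : Indep (B j) (m₂ j) μ := by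
      have h0 : Indep (B j) (⨆ j' ∈ ({j}ᶜ : Set (Fin k)), B j') μ := by
        have := indep_iSup_of_disjoint hB hindep
          (disjoint_compl_right : Disjoint ({j} : Set (Fin k)) ({j}ᶜ))
        simpa using this
      exact indep_of_indep_of_le_right h0 (hm₂ j)
    have hres := my_condexp_sup_indep (m0 := m0) (hB j)
      (le_trans (hm₂ j) (iSup₂_le fun j' _ => hB j')) (hn j) (hGmeas j) (hint j) hB2
    rw [hdecomp j]
    exact hres
  have h3 : μ[Y|m] =ᵐ[μ] ∑ j, μ[G j|n j] := by
    refine h1.trans ?_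
    have : ∀ᵐ ω ∂μ, ∀ j, (μ[G j|m]) ω = (μ[G j|n j]) ω := ae_all_iff.mpr fun j => h2 j
    filter_upwards [this] with ω hω
    simp only [Finset.sum_apply]
    exact Finset.sum_congr rfl fun j _ => hω j
  rw [my_variance_congr h3]
  refine IndepFun.variance_sum
    (fun j _ => my_memℒp_two_condexp (m0 := m0) (le_trans (hn j) (hB j)) (hGL2 j)) ?_
  intro j hj j' hj' hjj'
  have hind : Indep (MeasurableSpace.comap (μ[G j|n j]) inferInstance)
      (MeasurableSpace.comap (μ[G j'|n j']) inferInstance) μ := by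
    refine indep_of_indep_of_le_left (indep_of_indep_of_le_right (hindep.indep hjj') ?_) ?_
    · exact le_trans (Measurable.comap_le stronglyMeasurable_condExp.measurable) (hn j')
    · exact le_trans (Measurable.comap_le stronglyMeasurable_condExp.measurable) (hn j)
  exact hind


/-- Corollary 1: If the model is block-additive, `Y = ∑_{j=1}^k g_j(A_j)`,
with mutually independent groups `A_j = X_{C_j}` and `g_j(A_j)` square-integrable, then
for every `u ⊆ [1:p]` such that `u ⊄ C_j` for every `j`, the Sobol index of `Y`
vanishes: `S_u = (1/Var(Y)) ∑_{v⊆u} (-1)^{|u|-|v|} Var(E(Y|X_v)) = 0`. -/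
theorem sobol_zero_block_additive
    {Ω : Type*} [MeasurableSpace Ω] (μ : Measure Ω) [IsProbabilityMeasure μ]
    {p k : ℕ} {E : Fin p → Type*} [∀ i, MeasurableSpace (E i)]
    (X : ∀ i, Ω → E i) (hX : ∀ i, Measurable (X i))
    (C : Fin k → Finset (Fin p))
    (hpart : ∀ i : Fin p, ∃! j : Fin k, i ∈ C j)
    (hindep : iIndep
      (fun j : Fin k => ⨆ i ∈ C j, MeasurableSpace.comap (X i) inferInstance) μ)
    (G : Fin k → Ω → ℝ)
    (hGmeas : ∀ j : Fin k,
      StronglyMeasurable[⨆ i ∈ C j, MeasurableSpace.comap (X i) inferInstance] (G j))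
    (hGL2 : ∀ j : Fin k, MemLp (G j) 2 μ)
    (Y : Ω → ℝ) (hsum : Y =ᵐ[μ] fun ω => ∑ j : Fin k, G j ω)
    (hVarY : variance Y μ ≠ 0)
    (u : Finset (Fin p)) (hu : ∀ j : Fin k, ¬ u ⊆ C j) :
    (1 / variance Y μ) * ∑ v ∈ u.powerset, (-1 : ℝ) ^ (u.card - v.card) *
        variance (μ[Y | ⨆ i ∈ v, MeasurableSpace.comap (X i) inferInstance]) μ = 0 := by
  classical
  suffices h : ∑ v ∈ u.powerset, (-1 : ℝ) ^ (u.card - v.card) *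
      variance (μ[Y | ⨆ i ∈ v, MeasurableSpace.comap (X i) inferInstance]) μ = 0 by
    rw [h, mul_zero]
  have hB : ∀ j : Fin k,
      (⨆ i ∈ C j, MeasurableSpace.comap (X i) inferInstance) ≤ ‹MeasurableSpace Ω› :=
    fun j => iSup₂_le fun i _ => (hX i).comap_le
  -- the key decomposition of the variance of each conditional expectation
  have key : ∀ v : Finset (Fin p),
      variance (μ[Y | ⨆ i ∈ v, MeasurableSpace.comap (X i) inferInstance]) μ =
      ∑ j : Fin k,
        variance (μ[G j | ⨆ i ∈ v ∩ C j, MeasurableSpace.comap (X i) inferInstance]) μ := by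
    intro v
    refine my_variance_decomp hB hindep hGmeas hGL2 hsum
      (fun j => ⨆ i ∈ v ∩ C j, MeasurableSpace.comap (X i) inferInstance) ?_
      (fun j => ⨆ i ∈ v \ C j, MeasurableSpace.comap (X i) inferInstance) ?_ _ ?_
    · intro j
      exact iSup₂_le fun i hi =>
        le_iSup₂ (f := fun (i : Fin p) (_ : i ∈ C j) => MeasurableSpace.comap (X i)
          inferInstance) i (Finset.mem_of_mem_inter_right hi)
    · intro j
      refine iSup₂_le fun i hi => ?_
      obtain ⟨hiv, hiC⟩ := Finset.mem_sdiff.mp hi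
      obtain ⟨j', hj', -⟩ := hpart i
      have hne : j' ≠ j := fun h => hiC (h ▸ hj')
      calc MeasurableSpace.comap (X i) inferInstance
          ≤ ⨆ i' ∈ C j', MeasurableSpace.comap (X i') inferInstance :=
            le_iSup₂ (f := fun (i' : Fin p) (_ : i' ∈ C j') => MeasurableSpace.comap (X i')
              inferInstance) i hj'
        _ ≤ ⨆ j'' ∈ ({j}ᶜ : Set (Fin k)),
              ⨆ i' ∈ C j'', MeasurableSpace.comap (X i') inferInstance :=
            le_iSup₂ (f := fun (j'' : Fin k) (_ : j'' ∈ ({j}ᶜ : Set (Fin k))) =>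
              ⨆ i' ∈ C j'', MeasurableSpace.comap (X i') inferInstance) j' (by simp [hne])
    · intro j
      refine le_antisymm (iSup₂_le fun i hi => ?_) (sup_le (iSup₂_le fun i hi => ?_)
        (iSup₂_le fun i hi => ?_))
      · by_cases hc : i ∈ C j
        · exact le_sup_of_le_left (le_iSup₂ (f := fun (i' : Fin p) (_ : i' ∈ v ∩ C j) =>
            MeasurableSpace.comap (X i') inferInstance) i (Finset.mem_inter.mpr ⟨hi, hc⟩))
        · exact le_sup_of_le_right (le_iSup₂ (f := fun (i' : Fin p) (_ : i' ∈ v \ C j) =>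
            MeasurableSpace.comap (X i') inferInstance) i (Finset.mem_sdiff.mpr ⟨hi, hc⟩))
      · exact le_iSup₂ (f := fun (i' : Fin p) (_ : i' ∈ v) =>
          MeasurableSpace.comap (X i') inferInstance) i (Finset.mem_of_mem_inter_left hi)
      · exact le_iSup₂ (f := fun (i' : Fin p) (_ : i' ∈ v) =>
          MeasurableSpace.comap (X i') inferInstance) i ((Finset.mem_sdiff.mp hi).1)
  calc ∑ v ∈ u.powerset, (-1 : ℝ) ^ (u.card - v.card) *
        variance (μ[Y | ⨆ i ∈ v, MeasurableSpace.comap (X i) inferInstance]) μ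
      = ∑ v ∈ u.powerset, ∑ j : Fin k, (-1 : ℝ) ^ (u.card - v.card) *
          variance (μ[G j | ⨆ i ∈ v ∩ C j, MeasurableSpace.comap (X i) inferInstance]) μ :=
        Finset.sum_congr rfl fun v _ => by rw [key v, Finset.mul_sum]
    _ = ∑ j : Fin k, ∑ v ∈ u.powerset, (-1 : ℝ) ^ (u.card - v.card) *
          variance (μ[G j | ⨆ i ∈ v ∩ C j, MeasurableSpace.comap (X i) inferInstance]) μ :=
        Finset.sum_comm
    _ = 0 := by
        refine Finset.sum_eq_zero fun j _ => ?_
        obtain ⟨i₀, hi₀u, hi₀C⟩ := Finset.not_subset.mp (hu j)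
        refine my_alt_sum_zero u
          (fun v => variance
            (μ[G j | ⨆ i ∈ v ∩ C j, MeasurableSpace.comap (X i) inferInstance]) μ)
          i₀ hi₀u fun v => ?_
        simp only [Finset.insert_inter_of_notMem hi₀C]
end

section
/- Let p, c, u be integers with 1 ≤ c ≤ p and 0 ≤ u ≤ c−1. Then, as an identity of rational numbers, (1/p) ∑_{j=0}^{p−c} binom(p−c, j) · binom(p−1, u+j)^{-1} = (1/c) · binom(c−1, u)^{-1}. -/
lemma key_inv (k d : ℕ) :
    ((Nat.choose (k+d+1) k : ℚ))⁻¹ + ((Nat.choose (k+d+1) (k+1) : ℚ))⁻¹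
      = ((k+d+2 : ℚ)/(k+d+1)) * ((Nat.choose (k+d) k : ℚ))⁻¹ := by
  rw [Nat.cast_choose ℚ (by omega : k ≤ k+d+1),
      Nat.cast_choose ℚ (by omega : k+1 ≤ k+d+1),
      Nat.cast_choose ℚ (by omega : k ≤ k+d)]
  have h1 : k+d+1-k = d+1 := by omega
  have h2 : k+d+1-(k+1) = d := by omega
  have h3 : k+d-k = d := by omega
  rw [h1, h2, h3]
  have e1 : ((d+1).factorial : ℚ) = (d+1) * d.factorial := by
    rw [Nat.factorial_succ]; push_cast; ring
  have e2 : ((k+1).factorial : ℚ) = (k+1) * k.factorial := by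
    rw [Nat.factorial_succ]; push_cast; ring
  have e3 : ((k+d+1).factorial : ℚ) = (k+d+1) * (k+d).factorial := by
    rw [Nat.factorial_succ]; push_cast; ring
  rw [e1, e2, e3]
  have f1 : (k.factorial : ℚ) ≠ 0 := Nat.cast_ne_zero.2 (Nat.factorial_ne_zero _)
  have f2 : (d.factorial : ℚ) ≠ 0 := Nat.cast_ne_zero.2 (Nat.factorial_ne_zero _)
  have f3 : ((k+d).factorial : ℚ) ≠ 0 := Nat.cast_ne_zero.2 (Nat.factorial_ne_zero _)
  have f4 : ((k:ℚ)+d+1) ≠ 0 := by positivity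
  have f5 : ((k:ℚ)+1) ≠ 0 := by positivity
  have f6 : ((d:ℚ)+1) ≠ 0 := by positivity
  field_simp
  ring

lemma sum_pascal (m : ℕ) (f : ℕ → ℚ) :
    ∑ j ∈ Finset.range (m+2), (Nat.choose (m+1) j : ℚ) * f j
      = ∑ j ∈ Finset.range (m+1), (Nat.choose m j : ℚ) * (f j + f (j+1)) := by
  rw [Finset.sum_range_succ' (fun j => (Nat.choose (m+1) j : ℚ) * f j) (m+1)]
  have : ∀ i, (Nat.choose (m+1) (i+1) : ℚ) = Nat.choose m i + Nat.choose m (i+1) := by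
    intro i
    rw [Nat.choose_succ_succ]; push_cast; ring
  simp only [this]
  have h2 : ∑ i ∈ Finset.range (m+1), (Nat.choose m (i+1) : ℚ) * f (i+1)
      = ∑ j ∈ Finset.range (m+1), (Nat.choose m j : ℚ) * f j - f 0 := by
    rw [eq_sub_iff_add_eq, Finset.sum_range_succ,
        Finset.sum_range_succ' (fun j => (Nat.choose m j : ℚ) * f j) m]
    simp [Nat.choose_succ_self]
  calc ∑ i ∈ Finset.range (m+1), ((Nat.choose m i : ℚ) + Nat.choose m (i+1)) * f (i+1)
        + (Nat.choose (m+1) 0 : ℚ) * f 0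
      = ∑ i ∈ Finset.range (m+1), (Nat.choose m i : ℚ) * f (i+1)
        + (∑ i ∈ Finset.range (m+1), (Nat.choose m (i+1) : ℚ) * f (i+1) + f 0) := by
        simp only [add_mul, Finset.sum_add_distrib, Nat.choose_zero_right, Nat.cast_one,
          one_mul]
        ring
    _ = ∑ i ∈ Finset.range (m+1), (Nat.choose m i : ℚ) * f (i+1)
        + ∑ j ∈ Finset.range (m+1), (Nat.choose m j : ℚ) * f j := by rw [h2]; ring
    _ = ∑ j ∈ Finset.range (m+1), (Nat.choose m j : ℚ) * (f j + f (j+1)) := by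
        rw [← Finset.sum_add_distrib]; apply Finset.sum_congr rfl; intros; ring

/-- For integers `1 ≤ c ≤ p` and `0 ≤ u ≤ c-1`, as rational numbers,
`(1/p) ∑_{j=0}^{p-c} C(p-c, j) · C(p-1, u+j)⁻¹ = (1/c) · C(c-1, u)⁻¹`. -/
theorem inv_binom_shapley_identity (p c u : ℕ)
    (hc1 : 1 ≤ c) (hcp : c ≤ p) (hu : u ≤ c - 1) :
    (1 / (p : ℚ)) * ∑ j ∈ Finset.range (p - c + 1),
        (Nat.choose (p - c) j : ℚ) * ((Nat.choose (p - 1) (u + j) : ℚ))⁻¹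
      = (1 / (c : ℚ)) * ((Nat.choose (c - 1) u : ℚ))⁻¹ := by
  induction p, hcp using Nat.le_induction with
  | base => simp [Nat.sub_self]
  | succ p hp ih =>
      have hp1 : 1 ≤ p := le_trans hc1 hp
      have hm : p + 1 - c = (p - c) + 1 := by omega
      have hpm1 : p + 1 - 1 = p := by omega
      rw [hm, hpm1]
      set m := p - c with hmdef
      have hs := sum_pascal m (fun j => ((Nat.choose p (u + j) : ℚ))⁻¹)
      rw [hs]
      have hstep : ∀ j ∈ Finset.range (m + 1),
          (Nat.choose m j : ℚ) *
            (((Nat.choose p (u + j) : ℚ))⁻¹ + ((Nat.choose p (u + (j + 1)) : ℚ))⁻¹)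
          = ((p : ℚ) + 1) / p *
            ((Nat.choose m j : ℚ) * ((Nat.choose (p - 1) (u + j) : ℚ))⁻¹) := by
        intro j hj
        have hj' : j ≤ m := Nat.lt_succ_iff.mp (Finset.mem_range.mp hj)
        obtain ⟨d, hd⟩ : ∃ d, p = u + j + d + 1 := ⟨p - 1 - (u + j), by omega⟩
        have hkey := key_inv (u + j) d
        have e1 : u + j + d + 1 = p := hd.symm
        have e2 : u + j + d = p - 1 := by omega
        rw [e1, e2] at hkey
        rw [show u + (j + 1) = u + j + 1 from rfl, hkey]
        have hq : (p : ℚ) = (u : ℚ) + j + d + 1 := by exact_mod_cast hd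
        rw [hq]; push_cast; ring
      rw [Finset.sum_congr rfl hstep, ← Finset.mul_sum]
      have hp0 : (p : ℚ) ≠ 0 := Nat.cast_ne_zero.mpr (by omega)
      have hp10 : (p : ℚ) + 1 ≠ 0 := by positivity
      rw [← ih]
      push_cast
      field_simp
end

section
/- For every function v from the subsets of [1:p] to ℝ and every i ∈ [1:p], the subset-weighted Shapley formula equals the average over permutations: (1/p) ∑_{u⊆[1:p]\{i}} binom(p−1,|u|)^{-1} (v(u∪{i}) − v(u)) = (1/p!) ∑_{σ∈S_p} (v(P_i(σ)∪{i}) − v(P_i(σ))), where S_p is the set of all permutations of [1:p] and P_i(σ) denotes the set of elements of [1:p] that precede i in the ordering induced by σ. -/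
open Finset Equiv

section Aux

variable {p : ℕ}

private lemma card_filter_lt_fin (c : Fin p) :
    (Finset.univ.filter fun j : Fin p => j < c).card = (c : ℕ) := by
  rw [← Fin.card_Iio c]
  congr 1
  ext j
  simp

private lemma perm_filter_card (π : Equiv.Perm (Fin p)) (i : Fin p) :
    (Finset.univ.filter fun x => π x < π i).card = (π i : ℕ) := by
  rw [← card_filter_lt_fin (π i)]
  apply Finset.card_bij (fun x _ => π x)
  · intro a ha; simp only [Finset.mem_filter, Finset.mem_univ, true_and] at ha ⊢; exact ha
  · intro a _ b _ h; exact π.injective h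
  · intro b hb
    simp only [Finset.mem_filter, Finset.mem_univ, true_and] at hb
    exact ⟨π.symm b, by simp [hb], by simp⟩

private lemma exists_pi0 (i : Fin p) (u : Finset (Fin p)) (hiu : i ∉ u) :
    ∃ π₀ : Equiv.Perm (Fin p), ∀ x, (π₀ x < π₀ i ↔ x ∈ u) := by
  classical
  have hune : u ≠ Finset.univ := fun h => hiu (h ▸ Finset.mem_univ i)
  have hk : u.card < p := by
    have := Finset.card_lt_card (Finset.ssubset_univ_iff.mpr hune)
    simpa using this
  set c : Fin p := ⟨u.card, hk⟩ with hc
  have hcard : u.card = (Finset.univ.filter fun j : Fin p => j < c).card := by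
    rw [card_filter_lt_fin]
  have e : {x : Fin p // x ∈ u} ≃ {j : Fin p // j < c} :=
    (Finset.equivOfCardEq hcard).trans (Equiv.subtypeEquivRight (fun j => by simp))
  set ρ : Equiv.Perm (Fin p) := e.extendSubtype with hρ
  have hρu : ∀ x ∈ u, ρ x < c := fun x hx => e.extendSubtype_mem x hx
  have hρn : ∀ x, x ∉ u → ¬ ρ x < c := fun x hx => e.extendSubtype_not_mem x hx
  refine ⟨ρ.trans (Equiv.swap (ρ i) c), fun x => ?_⟩
  have hρi : ¬ ρ i < c := hρn i hiu
  simp only [Equiv.trans_apply, Equiv.swap_apply_left]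
  by_cases hx : x ∈ u
  · have h1 : ρ x < c := hρu x hx
    have h2 : ρ x ≠ ρ i := fun h => hρi (h ▸ h1)
    have h3 : ρ x ≠ c := ne_of_lt h1
    rw [Equiv.swap_apply_of_ne_of_ne h2 h3]
    exact ⟨fun _ => hx, fun _ => h1⟩
  · have hne : ¬ Equiv.swap (ρ i) c (ρ x) < c := by
      by_cases hxi : x = i
      · subst hxi; rw [Equiv.swap_apply_left]; exact lt_irrefl _
      · have h2 : ρ x ≠ ρ i := fun h => hxi (ρ.injective h)
        by_cases h3 : ρ x = c
        · rw [h3, Equiv.swap_apply_right]; exact hρi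
        · rw [Equiv.swap_apply_of_ne_of_ne h2 h3]; exact hρn x hx
    exact ⟨fun h => absurd h hne, fun h => absurd h hx⟩

private lemma fiber_card (i : Fin p) (u : Finset (Fin p)) (hiu : i ∉ u) :
    (Finset.univ.filter fun π : Equiv.Perm (Fin p) =>
        (Finset.univ.filter fun x => π x < π i) = u).card
      = Nat.factorial u.card * Nat.factorial (p - 1 - u.card) := by
  classical
  obtain ⟨π₀, hπ₀⟩ := exists_pi0 i u hiu
  set f : Fin p → Fin 3 := fun x => if x ∈ u then 0 else if x = i then 1 else 2 with hf
  have hf0 : ∀ y, f y = 0 ↔ y ∈ u := by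
    intro y; by_cases hy : y ∈ u <;> by_cases hyi : y = i <;>
      simp only [hf, if_pos, if_neg, hy, hyi, if_true, if_false, iff_true, iff_false] <;>
      first | decide | simp_all
  have hf1 : ∀ y, f y = 1 ↔ y = i := by
    intro y; by_cases hy : y ∈ u <;> by_cases hyi : y = i <;>
      simp only [hf, if_pos, if_neg, hy, hyi, if_true, if_false, iff_true, iff_false] <;>
      first | decide | simp_all
  -- characterizations of fiber membership
  have hmem : ∀ π : Equiv.Perm (Fin p),
      (Finset.univ.filter fun x => π x < π i) = u ↔ ∀ x, (π x < π i ↔ x ∈ u) := by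
    intro π
    rw [Finset.ext_iff]
    constructor
    · intro h x; have := h x; simpa using this
    · intro h x; simpa using h x
  have hπ₀i : (π₀ i : ℕ) = u.card := by
    rw [← perm_filter_card π₀ i]
    congr 1
    rw [hmem]; exact hπ₀
  -- bijection between fiber and stabilizer of f
  have hcard : (Finset.univ.filter fun π : Equiv.Perm (Fin p) =>
        (Finset.univ.filter fun x => π x < π i) = u).card
      = (Finset.univ.filter fun g : Equiv.Perm (Fin p) => f ∘ g = f).card := by
    apply Finset.card_bij' (fun π _ => π₀⁻¹ * π) (fun g _ => π₀ * g)
    · intro π hπ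
      simp only [Finset.mem_filter, Finset.mem_univ, true_and] at hπ ⊢
      rw [hmem] at hπ
      have hπi : π i = π₀ i := by
        apply Fin.ext
        rw [hπ₀i, ← perm_filter_card π i]
        congr 1
        rw [hmem]; exact hπ
      funext x
      simp only [Function.comp_apply, Equiv.Perm.mul_apply]
      by_cases hx : x ∈ u
      · have h1 : π x < π₀ i := hπi ▸ (hπ x).mpr hx
        have h2 : π₀⁻¹ (π x) ∈ u := by
          rw [← hπ₀]
          simpa using h1
        rw [(hf0 _).mpr h2, (hf0 _).mpr hx]
      · by_cases hxi : x = i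
        · subst hxi
          rw [hπi]
          simp
        · have h1 : ¬ π x < π₀ i := hπi ▸ fun h => hx ((hπ x).mp h)
          have h2 : π x ≠ π₀ i := fun h => hxi (π.injective (h.trans hπi.symm))
          have h3 : π₀⁻¹ (π x) ∉ u := by
            intro h
            exact h1 (by simpa using (hπ₀ _).mpr h)
          have h4 : π₀⁻¹ (π x) ≠ i := fun h => h2 (by
            have := congrArg π₀ h
            simpa using this)
          simp only [hf, if_neg hx, if_neg hxi, if_neg h3, if_neg h4]
    · intro g hg
      simp only [Finset.mem_filter, Finset.mem_univ, true_and] at hg ⊢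
      rw [hmem]
      have hgx : ∀ x, f (g x) = f x := fun x => congrFun hg x
      have hgi : g i = i := (hf1 _).mp (by rw [hgx i, (hf1 i).mpr rfl])
      have hgu : ∀ x, g x ∈ u ↔ x ∈ u := fun x => by
        rw [← hf0, hgx, hf0]
      intro x
      simp only [Equiv.Perm.mul_apply, hgi]
      rw [hπ₀ (g x), hgu]
    · intro π _; group
    · intro g _; group
  rw [hcard, ← Fintype.card_subtype, DomMulAct.stabilizer_card f]
  have c0 : Fintype.card {a : Fin p // f a = 0} = u.card := by
    rw [Fintype.card_subtype]
    congr 1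
    ext a; simp [hf0]
  have c1 : Fintype.card {a : Fin p // f a = 1} = 1 := by
    rw [Fintype.card_subtype]
    have : (Finset.univ.filter fun a : Fin p => f a = 1) = {i} := by
      ext a; simp [hf1]
    rw [this, Finset.card_singleton]
  have c2 : Fintype.card {a : Fin p // f a = 2} = p - 1 - u.card := by
    rw [Fintype.card_subtype]
    have h2 : (Finset.univ.filter fun a : Fin p => f a = 2) = Finset.univ \ insert i u := by
      ext a
      by_cases ha : a ∈ u <;> by_cases hai : a = i <;>
        simp only [hf, if_pos, if_neg, ha, hai, if_true, if_false, Finset.mem_sdiff,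
          Finset.mem_univ, Finset.mem_insert, Finset.mem_filter, true_and] <;>
        first | decide | simp_all <;> decide
    rw [h2, Finset.card_sdiff_of_subset (Finset.subset_univ _), Finset.card_insert_of_notMem hiu,
      Finset.card_univ, Fintype.card_fin]
    omega
  rw [Fin.prod_univ_three]
  rw [c0, c1, c2]
  simp [Nat.factorial]

end Aux

/-- For every `v : 𝒫([1:p]) → ℝ` and `i ∈ [1:p]`, the subset-weighted
Shapley formula equals the average over permutations:
`(1/p) ∑_{u ⊆ [1:p]\{i}} C(p-1,|u|)⁻¹ (v(u∪{i}) - v(u))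
  = (1/p!) ∑_{σ ∈ S_p} (v(P_i(σ)∪{i}) - v(P_i(σ)))`,
where `P_i(σ) = {x : σ⁻¹(x) < σ⁻¹(i)}` is the set of elements preceding `i` in the
ordering induced by `σ`. -/
theorem shapley_subset_eq_perm_average {p : ℕ} (v : Finset (Fin p) → ℝ) (i : Fin p) :
    (1 / (p : ℝ)) * ∑ u ∈ (Finset.univ.erase i).powerset,
        ((Nat.choose (p - 1) u.card : ℝ))⁻¹ * (v (insert i u) - v u)
      = (1 / (Nat.factorial p : ℝ)) * ∑ σ : Equiv.Perm (Fin p),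
        (v (insert i (Finset.univ.filter fun x => σ.symm x < σ.symm i))
          - v (Finset.univ.filter fun x => σ.symm x < σ.symm i)) := by
  classical
  have hp : 0 < p := i.pos
  -- Step 1: reindex the permutation sum by π = σ⁻¹
  have h1 : ∑ σ : Equiv.Perm (Fin p),
        (v (insert i (Finset.univ.filter fun x => σ.symm x < σ.symm i))
          - v (Finset.univ.filter fun x => σ.symm x < σ.symm i))
      = ∑ π : Equiv.Perm (Fin p),
        (v (insert i (Finset.univ.filter fun x => π x < π i))
          - v (Finset.univ.filter fun x => π x < π i)) := by
    exact Fintype.sum_equiv (Equiv.inv (Equiv.Perm (Fin p))) _ _ (fun σ => rfl)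
  -- Step 2: group the permutation sum by fibers
  have h2 : ∑ π : Equiv.Perm (Fin p),
        (v (insert i (Finset.univ.filter fun x => π x < π i))
          - v (Finset.univ.filter fun x => π x < π i))
      = ∑ u ∈ (Finset.univ.erase i).powerset,
          ((Nat.factorial u.card * Nat.factorial (p - 1 - u.card) : ℕ) : ℝ) * (v (insert i u) - v u) := by
    rw [← Finset.sum_fiberwise_of_maps_to (g := fun π : Equiv.Perm (Fin p) =>
        Finset.univ.filter fun x => π x < π i) (t := (Finset.univ.erase i).powerset)
      (fun π _ => by
        rw [Finset.mem_powerset]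
        intro x hx
        simp only [Finset.mem_filter, Finset.mem_univ, true_and] at hx
        refine Finset.mem_erase.mpr ⟨fun h => ?_, Finset.mem_univ x⟩
        subst h; exact lt_irrefl _ hx)]
    apply Finset.sum_congr rfl
    intro u hu
    rw [Finset.mem_powerset] at hu
    have hiu : i ∉ u := fun h => (Finset.mem_erase.mp (hu h)).1 rfl
    have : ∀ π ∈ Finset.univ.filter (fun π : Equiv.Perm (Fin p) =>
        (Finset.univ.filter fun x => π x < π i) = u),
        (v (insert i (Finset.univ.filter fun x => π x < π i))
          - v (Finset.univ.filter fun x => π x < π i)) = v (insert i u) - v u := by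
      intro π hπ
      simp only [Finset.mem_filter, Finset.mem_univ, true_and] at hπ
      rw [hπ]
    rw [Finset.sum_congr rfl this, Finset.sum_const, fiber_card i u hiu, nsmul_eq_mul]
  rw [h1, h2, Finset.mul_sum, Finset.mul_sum]
  apply Finset.sum_congr rfl
  intro u hu
  rw [Finset.mem_powerset] at hu
  have hk1 : u.card ≤ p - 1 := by
    have := Finset.card_le_card hu
    rwa [Finset.card_erase_of_mem (Finset.mem_univ i), Finset.card_univ,
      Fintype.card_fin] at this
  have key : ((p - 1).choose u.card * (Nat.factorial u.card * Nat.factorial (p - 1 - u.card)) : ℕ) = Nat.factorial (p - 1) := by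
    rw [← Nat.choose_mul_factorial_mul_factorial hk1]; ring
  have hpf : (p : ℕ) * Nat.factorial (p - 1) = Nat.factorial p := Nat.mul_factorial_pred hp.ne'
  have hc0 : ((p - 1).choose u.card : ℝ) ≠ 0 :=
    Nat.cast_ne_zero.mpr (Nat.choose_pos hk1).ne'
  have hp0 : (p : ℝ) ≠ 0 := Nat.cast_ne_zero.mpr hp.ne'
  have hpf0 : ((Nat.factorial p : ℕ) : ℝ) ≠ 0 := Nat.cast_ne_zero.mpr (Nat.factorial_pos p).ne'
  have keyR : ((p - 1).choose u.card : ℝ) * ((Nat.factorial u.card * Nat.factorial (p - 1 - u.card) : ℕ) : ℝ) = ((Nat.factorial (p - 1) : ℕ) : ℝ) := by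
    exact_mod_cast key
  have hpfR : (p : ℝ) * ((Nat.factorial (p-1) : ℕ) : ℝ) = ((Nat.factorial p : ℕ) : ℝ) := by
    exact_mod_cast hpf
  have coeff : (1 / (p : ℝ)) * ((Nat.choose (p - 1) u.card : ℝ))⁻¹
      = (1 / ((Nat.factorial p : ℕ) : ℝ)) * ((Nat.factorial u.card * Nat.factorial (p - 1 - u.card) : ℕ) : ℝ) := by
    push_cast at keyR hpfR ⊢
    field_simp
    linear_combination -hpfR - (p:ℝ) * keyR
  calc (1 / (p : ℝ)) * (((Nat.choose (p - 1) u.card : ℝ))⁻¹ * (v (insert i u) - v u))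
      = ((1 / (p : ℝ)) * ((Nat.choose (p - 1) u.card : ℝ))⁻¹) * (v (insert i u) - v u) := by ring
    _ = ((1 / ((Nat.factorial p : ℕ) : ℝ)) * ((Nat.factorial u.card * Nat.factorial (p - 1 - u.card) : ℕ) : ℝ)) * (v (insert i u) - v u) := by rw [coeff]
    _ = (1 / ((Nat.factorial p : ℕ) : ℝ)) * (((Nat.factorial u.card * Nat.factorial (p - 1 - u.card) : ℕ) : ℝ) * (v (insert i u) - v u)) := by ring
end
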